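/- Let $G$ be a Cameron--Walker graph with standard labeling and bipartite part $G_{\mathrm{bip}}$. The equality $i(G) = \sum_{j=1}^n t_j + m$ holds (equivalently, $\operatorname{depth} = \operatorname{reg}$ for $S/I(G)$) if and only if for every subset $V \subseteq \{v_1,\ldots,v_m\}$ one has $\sum_{v_i \in V} s_i + |\{j : N_{G_{\mathrm{bip}}}(w_j) \subseteq V\}| \geq \sum_{j : N_{G_{\mathrm{bip}}}(w_j) \subseteq V} t_j + |V|$. -/

import Mathlib

/-- Vertices of a Cameron–Walker graph with standard labeling: the `vᵢ`, the `wⱼ`,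
the leaves `x^(i)_k` (`1 ≤ k ≤ sᵢ`), and the pendant-triangle vertices
`y^(j)_{ℓ,1}, y^(j)_{ℓ,2}` (`1 ≤ ℓ ≤ tⱼ`). -/
abbrev CWVert (m n : ℕ) (s : Fin m → ℕ) (t : Fin n → ℕ) : Type :=
  Fin m ⊕ Fin n ⊕ (Σ i : Fin m, Fin (s i)) ⊕ (Σ j : Fin n, Fin (t j) × Fin 2)

def cwRel (m n : ℕ) (s : Fin m → ℕ) (t : Fin n → ℕ) (B : Fin m → Fin n → Prop) :
    CWVert m n s t → CWVert m n s t → Prop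
  | Sum.inl i, Sum.inr (Sum.inl j) => B i j
  | Sum.inl i, Sum.inr (Sum.inr (Sum.inl ⟨i', _⟩)) => i = i'
  | Sum.inr (Sum.inl j), Sum.inr (Sum.inr (Sum.inr ⟨j', _, _⟩)) => j = j'
  | Sum.inr (Sum.inr (Sum.inr ⟨j, ℓ, _⟩)), Sum.inr (Sum.inr (Sum.inr ⟨j', ℓ', _⟩)) =>
      j = j' ∧ (ℓ : ℕ) = (ℓ' : ℕ)
  | _, _ => False

/-- The Cameron–Walker graph determined by the data `m, n, s, t, B`: a bipartite part
on `{v₁,…,v_m} ∪ {w₁,…,w_n}` with edges given by `B`, `s i` leaf edges attached to `vᵢ`,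
and `t j` pendant triangles attached to `wⱼ`. -/
def cwGraph (m n : ℕ) (s : Fin m → ℕ) (t : Fin n → ℕ) (B : Fin m → Fin n → Prop) :
    SimpleGraph (CWVert m n s t) :=
  SimpleGraph.fromRel (cwRel m n s t B)

/-- The bipartite part of the Cameron–Walker graph. -/
def bipGraph (m n : ℕ) (B : Fin m → Fin n → Prop) : SimpleGraph (Fin m ⊕ Fin n) :=
  SimpleGraph.fromRel fun a b =>
    match a, b with
    | Sum.inl i, Sum.inr j => B i j
    | _, _ => False

/-- An independent dominating set: an independent set `A` with `A ∪ N_G(A) = V(G)`. -/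
def IsIndepDomSet {V : Type} (G : SimpleGraph V) (A : Finset V) : Prop :=
  (∀ a ∈ A, ∀ b ∈ A, ¬ G.Adj a b) ∧ (∀ v, v ∈ A ∨ ∃ a ∈ A, G.Adj a v)

/-- `i(G)`: the minimum cardinality of an independent dominating set of `G`. -/
noncomputable def indepDomNumber {V : Type} (G : SimpleGraph V) : ℕ :=
  sInf {k | ∃ A : Finset V, IsIndepDomSet G A ∧ A.card = k}

/-- The independence number: the maximum cardinality of an independent set of `G`. -/
noncomputable def indepNumber {V : Type} [Fintype V] (G : SimpleGraph V) : ℕ :=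
  sSup {k | ∃ A : Finset V, (∀ a ∈ A, ∀ b ∈ A, ¬ G.Adj a b) ∧ A.card = k}

/-- The matching number: the maximum cardinality of a matching of `G`. -/
noncomputable def matchingNumber {V : Type} [Fintype V] (G : SimpleGraph V) : ℕ :=
  sSup {k | ∃ M : Finset (Sym2 V), (∀ e ∈ M, e ∈ G.edgeSet) ∧
    (∀ e ∈ M, ∀ e' ∈ M, e ≠ e' → ∀ v, v ∈ e → v ∉ e') ∧ M.card = k}
open Finset

namespace CWAux

variable {m n : ℕ} (s : Fin m → ℕ) (t : Fin n → ℕ) (B : Fin m → Fin n → Prop)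
  [∀ i j, Decidable (B i j)]

omit [∀ i j, Decidable (B i j)] in
lemma cw_adj {a b : CWVert m n s t} :
    (cwGraph m n s t B).Adj a b ↔ a ≠ b ∧ (cwRel m n s t B a b ∨ cwRel m n s t B b a) :=
  SimpleGraph.fromRel_adj _ _ _

/-- `Jset B Vs = {j : N_bip(w_j) ⊆ Vs}`. -/
def Jset (Vs : Finset (Fin m)) : Finset (Fin n) :=
  Finset.univ.filter fun j => ∀ i, B i j → i ∈ Vs

lemma mem_Jset {Vs : Finset (Fin m)} {j : Fin n} :
    j ∈ Jset B Vs ↔ ∀ i, B i j → i ∈ Vs := by simp [Jset]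

/-- Forget the `Fin 2` coordinate of a triangle vertex. -/
def yProj : (Σ j : Fin n, Fin (t j) × Fin 2) → (Σ j : Fin n, Fin (t j)) :=
  fun x => ⟨x.1, x.2.1⟩

lemma y_inj {c : Fin 2} : Function.Injective
    (fun p : Σ j : Fin n, Fin (t j) => (⟨p.1, (p.2, c)⟩ : Σ j : Fin n, Fin (t j) × Fin 2)) := by
  intro p q h
  have := congrArg (yProj t) h
  simpa [yProj, Sigma.eta] using this

/-- The candidate independent dominating set associated to `Vs ⊆ {v_1,…,v_m}`. -/
def Aset (Vs : Finset (Fin m)) : Finset (CWVert m n s t) :=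
  (Finset.univ \ Vs).disjSum ((Jset B Vs).disjSum
    ((Vs.sigma fun i => (Finset.univ : Finset (Fin (s i)))).disjSum
      (((Finset.univ \ Jset B Vs).sigma fun j => (Finset.univ : Finset (Fin (t j)))).image
        fun p => ⟨p.1, (p.2, 0)⟩)))

lemma mem_Aset_v {Vs : Finset (Fin m)} {i : Fin m} :
    (Sum.inl i : CWVert m n s t) ∈ Aset s t B Vs ↔ i ∉ Vs := by
  simp [Aset]

lemma mem_Aset_w {Vs : Finset (Fin m)} {j : Fin n} :
    (Sum.inr (Sum.inl j) : CWVert m n s t) ∈ Aset s t B Vs ↔ j ∈ Jset B Vs := by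
  simp [Aset]

lemma mem_Aset_x {Vs : Finset (Fin m)} {p : Σ i : Fin m, Fin (s i)} :
    (Sum.inr (Sum.inr (Sum.inl p)) : CWVert m n s t) ∈ Aset s t B Vs ↔ p.1 ∈ Vs := by
  simp [Aset]

lemma mem_Aset_y {Vs : Finset (Fin m)} {q : Σ j : Fin n, Fin (t j) × Fin 2} :
    (Sum.inr (Sum.inr (Sum.inr q)) : CWVert m n s t) ∈ Aset s t B Vs ↔
      q.1 ∉ Jset B Vs ∧ q.2.2 = 0 := by
  obtain ⟨j, ℓ, c⟩ := q
  simp only [Aset, inr_mem_disjSum, mem_image, mem_sigma, mem_sdiff, mem_univ, true_and]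
  constructor
  · rintro ⟨p, hp, heq⟩
    have h1 := congrArg (yProj t) heq
    simp only [yProj, Sigma.eta] at h1
    have h2 := congrArg (fun x : Σ j : Fin n, Fin (t j) × Fin 2 => x.2.2) heq
    subst h1
    exact ⟨hp.1, h2.symm⟩
  · rintro ⟨hj, rfl⟩
    exact ⟨⟨j, ℓ⟩, ⟨hj, trivial⟩, rfl⟩

lemma card_Aset (Vs : Finset (Fin m)) :
    (Aset s t B Vs).card = (Finset.univ \ Vs).card + (Jset B Vs).card +
      (∑ i ∈ Vs, s i) + ∑ j ∈ Finset.univ \ Jset B Vs, t j := by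
  simp only [Aset, card_disjSum]
  rw [card_image_of_injective _ (y_inj t), card_sigma, card_sigma]
  simp [Finset.card_univ]
  ring


lemma isIDS_Aset (hs : ∀ i, 1 ≤ s i) (Vs : Finset (Fin m)) :
    IsIndepDomSet (cwGraph m n s t B) (Aset s t B Vs) := by
  constructor
  · intro a ha b hb hadj
    rw [cw_adj] at hadj
    obtain ⟨hne, h⟩ := hadj
    rcases a with i | j | ⟨i, k⟩ | ⟨j, ℓ, c⟩ <;> rcases b with i' | j' | ⟨i', k'⟩ | ⟨j', ℓ', c'⟩ <;>
      simp only [cwRel, false_or, or_false, or_self] at h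
    · -- v_i vs w_j'
      rw [mem_Aset_v] at ha; rw [mem_Aset_w, mem_Jset] at hb
      exact ha (hb _ h)
    · -- v_i vs leaf(i',k')
      rw [mem_Aset_v] at ha; rw [mem_Aset_x] at hb
      exact ha (h ▸ hb)
    · -- w_j vs v_i'
      rw [mem_Aset_w, mem_Jset] at ha; rw [mem_Aset_v] at hb
      exact hb (ha _ h)
    · -- w_j vs y(j',ℓ',c')
      rw [mem_Aset_w] at ha; rw [mem_Aset_y] at hb
      exact hb.1 (h ▸ ha)
    · -- leaf vs v
      rw [mem_Aset_x] at ha; rw [mem_Aset_v] at hb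
      exact hb (h ▸ ha)
    · -- y vs w
      rw [mem_Aset_y] at ha; rw [mem_Aset_w] at hb
      exact ha.1 (h ▸ hb)
    · -- y vs y
      rw [mem_Aset_y] at ha; rw [mem_Aset_y] at hb
      simp only at ha hb
      obtain ⟨hj, hℓ⟩ : j = j' ∧ (ℓ : ℕ) = (ℓ' : ℕ) := by
        rcases h with ⟨h1, h2⟩ | ⟨h1, h2⟩
        · exact ⟨h1, h2⟩
        · exact ⟨h1.symm, h2.symm⟩
      subst hj
      have hℓ' : ℓ = ℓ' := Fin.ext hℓ
      subst hℓ'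
      exact hne (by rw [ha.2, hb.2])
  · intro v
    rcases v with i | j | ⟨i, k⟩ | ⟨j, ℓ, c⟩
    · by_cases hi : i ∈ Vs
      · right
        refine ⟨Sum.inr (Sum.inr (Sum.inl ⟨i, ⟨0, hs i⟩⟩)), ?_, ?_⟩
        · rw [mem_Aset_x]; exact hi
        · rw [cw_adj]; exact ⟨by simp, Or.inr rfl⟩
      · left; rw [mem_Aset_v]; exact hi
    · by_cases hj : j ∈ Jset B Vs
      · left; rw [mem_Aset_w]; exact hj
      · right
        rw [mem_Jset] at hj
        push_neg at hj
        obtain ⟨i, hBij, hi⟩ := hj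
        refine ⟨Sum.inl i, ?_, ?_⟩
        · rw [mem_Aset_v]; exact hi
        · rw [cw_adj]; exact ⟨by simp, Or.inl hBij⟩
    · by_cases hi : i ∈ Vs
      · left; rw [mem_Aset_x]; exact hi
      · right
        refine ⟨Sum.inl i, ?_, ?_⟩
        · rw [mem_Aset_v]; exact hi
        · rw [cw_adj]; exact ⟨by simp, Or.inl rfl⟩
    · by_cases hj : j ∈ Jset B Vs
      · right
        refine ⟨Sum.inr (Sum.inl j), ?_, ?_⟩
        · rw [mem_Aset_w]; exact hj
        · rw [cw_adj]; exact ⟨by simp, Or.inl rfl⟩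
      · by_cases hc : c = 0
        · left; rw [mem_Aset_y]; exact ⟨hj, hc⟩
        · right
          refine ⟨Sum.inr (Sum.inr (Sum.inr ⟨j, ℓ, 0⟩)), ?_, ?_⟩
          · rw [mem_Aset_y]; exact ⟨hj, rfl⟩
          · rw [cw_adj]
            refine ⟨?_, Or.inl ⟨rfl, rfl⟩⟩
            simp only [ne_eq, Sum.inr.injEq]
            intro hh
            have := congrArg (fun x : Σ j : Fin n, Fin (t j) × Fin 2 => x.2.2) hh
            simp at this
            exact hc this.symm


omit [∀ i j, Decidable (B i j)] in
lemma exists_B_of_connected (hm : 1 ≤ m) (hconn : (bipGraph m n B).Connected) (j : Fin n) :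
    ∃ i, B i j := by
  have hreach := hconn.preconnected (Sum.inr j) (Sum.inl ⟨0, hm⟩)
  obtain ⟨w⟩ := hreach
  match w with
  | SimpleGraph.Walk.cons (v := x) hadj p =>
    rw [bipGraph, SimpleGraph.fromRel_adj] at hadj
    obtain ⟨-, h | h⟩ := hadj
    · rcases x with i | j' <;> simp at h
    · rcases x with i | j' <;> simp at h
      exact ⟨i, h⟩

/-- Any independent dominating set of the Cameron–Walker graph has at least
`|univ \ Vs| + ∑_{i ∈ Vs} s i + |Ws| + ∑_{j ∉ Ws} t j` elements, where `Vs`, `Ws`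
record which `v`'s and `w`'s it contains.  We state the consequences we need. -/
lemma ids_card_ge (hs : ∀ i, 1 ≤ s i)
    (Hall : ∀ Vs : Finset (Fin m),
      (∑ j ∈ Finset.univ.filter fun j => ∀ i, B i j → i ∈ Vs, t j) + Vs.card ≤
        (∑ i ∈ Vs, s i) + (Finset.univ.filter fun j => ∀ i, B i j → i ∈ Vs).card)
    (A : Finset (CWVert m n s t)) (hA : IsIndepDomSet (cwGraph m n s t B) A) :
    (∑ j, t j) + m ≤ A.card := by
  obtain ⟨hind, hdom⟩ := hA
  set Vs : Finset (Fin m) := A.toLeft with hVs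
  set Ws : Finset (Fin n) := A.toRight.toLeft with hWs
  set AL : Finset (Σ i : Fin m, Fin (s i)) := A.toRight.toRight.toLeft with hAL
  set AY : Finset (Σ j : Fin n, Fin (t j) × Fin 2) := A.toRight.toRight.toRight with hAY
  have hmemV : ∀ i : Fin m, i ∈ Vs ↔ (Sum.inl i : CWVert m n s t) ∈ A := by
    intro i; simp [hVs]
  have hmemW : ∀ j : Fin n, j ∈ Ws ↔ (Sum.inr (Sum.inl j) : CWVert m n s t) ∈ A := by
    intro j; simp [hWs]
  have hmemL : ∀ p : Σ i : Fin m, Fin (s i),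
      p ∈ AL ↔ (Sum.inr (Sum.inr (Sum.inl p)) : CWVert m n s t) ∈ A := by
    intro p; simp [hAL]
  have hmemY : ∀ q : Σ j : Fin n, Fin (t j) × Fin 2,
      q ∈ AY ↔ (Sum.inr (Sum.inr (Sum.inr q)) : CWVert m n s t) ∈ A := by
    intro q; simp [hAY]
  have hcard : A.card = Vs.card + (Ws.card + (AL.card + AY.card)) := by
    rw [hVs, hWs, hAL, hAY]
    rw [Finset.card_toLeft_add_card_toRight, Finset.card_toLeft_add_card_toRight,
      Finset.card_toLeft_add_card_toRight]
  -- all leaves at i ∉ Vs are in A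
  have hleaf : ∀ (i : Fin m) (k : Fin (s i)), i ∉ Vs → (⟨i, k⟩ : Σ i, Fin (s i)) ∈ AL := by
    intro i k hi
    rcases hdom (Sum.inr (Sum.inr (Sum.inl ⟨i, k⟩))) with hin | ⟨a, haA, hadj⟩
    · rw [hmemL]; exact hin
    · exfalso
      rw [cw_adj] at hadj
      obtain ⟨-, h | h⟩ := hadj <;>
        rcases a with i' | j' | ⟨i', k'⟩ | ⟨j', ℓ', c'⟩ <;>
          simp only [cwRel] at h
      exact hi ((hmemV i).mpr (h ▸ haA))
  -- each triangle at j ∉ Ws contributes a vertex of A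
  have htri : ∀ (j : Fin n) (ℓ : Fin (t j)), j ∉ Ws →
      (⟨j, (ℓ, 0)⟩ : Σ j, Fin (t j) × Fin 2) ∈ AY ∨
        (⟨j, (ℓ, 1)⟩ : Σ j, Fin (t j) × Fin 2) ∈ AY := by
    intro j ℓ hj
    rcases hdom (Sum.inr (Sum.inr (Sum.inr ⟨j, (ℓ, 0)⟩))) with hin | ⟨a, haA, hadj⟩
    · left; rw [hmemY]; exact hin
    · rw [cw_adj] at hadj
      obtain ⟨hne, h | h⟩ := hadj <;>
        rcases a with i' | j' | ⟨i', k'⟩ | ⟨j', ℓ', c'⟩ <;>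
          simp only [cwRel] at h
      · -- h : j' = j  (w adjacent)
        exfalso; exact hj ((hmemW j).mpr (h ▸ haA))
      · -- h : ⟨j',ℓ',c'⟩ rel ⟨j,ℓ,0⟩ : j' = j ∧ ↑ℓ' = ↑ℓ
        obtain ⟨rfl, hl⟩ := h
        have : ℓ' = ℓ := Fin.ext hl
        subst this
        -- c' must be 1 since a ≠ b
        have hc : c' = 1 := by
          by_contra hc
          have hc0 : c' = 0 := by omega
          subst hc0
          exact hne rfl
        subst hc
        right; rw [hmemY]; exact haA
      · -- h : ⟨j,ℓ,0⟩ rel ⟨j',ℓ',c'⟩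
        obtain ⟨rfl, hl⟩ := h
        have : ℓ = ℓ' := Fin.ext hl
        subst this
        have hc : c' = 1 := by
          by_contra hc
          have hc0 : c' = 0 := by omega
          subst hc0
          exact hne rfl
        subst hc
        right; rw [hmemY]; exact haA
  -- Ws ⊆ Jset of complement
  have hWsJ : Ws ⊆ Jset B (Finset.univ \ Vs) := by
    intro j hj
    rw [mem_Jset]
    intro i hBij
    simp only [Finset.mem_sdiff, Finset.mem_univ, true_and]
    intro hi
    exact hind _ ((hmemV i).mp hi) _ ((hmemW j).mp hj)
      (by rw [cw_adj]; exact ⟨by simp, Or.inl hBij⟩)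
  -- j ∈ J \ Ws  →  t j ≥ 1
  have hJt : ∀ j ∈ Jset B (Finset.univ \ Vs) \ Ws, 1 ≤ t j := by
    intro j hj
    rw [Finset.mem_sdiff] at hj
    obtain ⟨hjJ, hjW⟩ := hj
    by_contra ht
    have ht0 : t j = 0 := by omega
    rcases hdom (Sum.inr (Sum.inl j)) with hin | ⟨a, haA, hadj⟩
    · exact hjW ((hmemW j).mpr hin)
    · rw [cw_adj] at hadj
      obtain ⟨hne, h | h⟩ := hadj <;>
        rcases a with i' | j' | ⟨i', k'⟩ | ⟨j', ℓ', c'⟩ <;>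
          simp only [cwRel] at h
      · -- h : cwRel a (w j) : a = inl i', B i' j
        rw [mem_Jset] at hjJ
        have hmem := hjJ i' h
        rw [Finset.mem_sdiff] at hmem
        exact hmem.2 ((hmemV i').mpr haA)
      · -- h : cwRel (w j) a, a = y(j',ℓ',c') with j = j'
        subst h
        exact absurd ℓ'.isLt (by omega)
  -- count leaves
  have hALcard : ∑ i ∈ Finset.univ \ Vs, s i ≤ AL.card := by
    have hsub : ((Finset.univ \ Vs).sigma fun i => (Finset.univ : Finset (Fin (s i)))) ⊆ AL := by
      intro p hp
      rw [Finset.mem_sigma] at hp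
      obtain ⟨i, k⟩ := p
      have := hleaf i k (by have := hp.1; rw [Finset.mem_sdiff] at this; exact this.2)
      exact this
    calc ∑ i ∈ Finset.univ \ Vs, s i
        = ((Finset.univ \ Vs).sigma fun i => (Finset.univ : Finset (Fin (s i)))).card := by
          rw [Finset.card_sigma]; simp
      _ ≤ AL.card := Finset.card_le_card hsub
  -- count triangle vertices
  have hAYcard : ∑ j ∈ Finset.univ \ Ws, t j ≤ AY.card := by
    classical
    set f : (Σ j : Fin n, Fin (t j)) → (Σ j : Fin n, Fin (t j) × Fin 2) :=
      fun p => ⟨p.1, (p.2, if (⟨p.1, (p.2, 0)⟩ : Σ j, Fin (t j) × Fin 2) ∈ AY then 0 else 1)⟩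
      with hf
    have hmaps : ∀ p ∈ ((Finset.univ \ Ws).sigma fun j => (Finset.univ : Finset (Fin (t j)))),
        f p ∈ AY := by
      intro p hp
      rw [Finset.mem_sigma] at hp
      obtain ⟨j, ℓ⟩ := p
      have hj : j ∉ Ws := by have := hp.1; rw [Finset.mem_sdiff] at this; exact this.2
      rcases htri j ℓ hj with h0 | h1
      · simpa [hf, h0] using h0
      · by_cases h0 : (⟨j, (ℓ, 0)⟩ : Σ j, Fin (t j) × Fin 2) ∈ AY
        · simpa [hf, h0] using h0
        · simpa [hf, h0] using h1
    have hinj : Set.InjOn f ((Finset.univ \ Ws).sigma fun j =>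
        (Finset.univ : Finset (Fin (t j)))) := by
      intro p _ q _ h
      have := congrArg (yProj t) h
      exact this
    calc ∑ j ∈ Finset.univ \ Ws, t j
        = ((Finset.univ \ Ws).sigma fun j => (Finset.univ : Finset (Fin (t j)))).card := by
          rw [Finset.card_sigma]; simp
      _ ≤ AY.card := Finset.card_le_card_of_injOn f hmaps hinj
  -- final arithmetic
  have hHall := Hall (Finset.univ \ Vs)
  set J : Finset (Fin n) := Jset B (Finset.univ \ Vs) with hJ
  have hJfilter : (Finset.univ.filter fun j => ∀ i, B i j → i ∈ Finset.univ \ Vs) = J := rfl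
  rw [hJfilter] at hHall
  have h1 : Vs.card + (Finset.univ \ Vs).card = m := by
    rw [Finset.card_sdiff_of_subset (Finset.subset_univ _)]
    have := Finset.card_le_card (Finset.subset_univ Vs)
    simp only [Finset.card_univ, Fintype.card_fin] at *
    omega
  have h2 : (∑ j ∈ Ws, t j) + ∑ j ∈ Finset.univ \ Ws, t j = ∑ j, t j := by
    rw [add_comm]; exact Finset.sum_sdiff (Finset.subset_univ _)
  have h3 : (∑ j ∈ J \ Ws, t j) + ∑ j ∈ Ws, t j = ∑ j ∈ J, t j :=
    Finset.sum_sdiff hWsJ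
  have h4 : Ws.card + (J \ Ws).card = J.card := by
    rw [Finset.card_sdiff_of_subset hWsJ]
    have := Finset.card_le_card hWsJ
    omega
  have h5 : (J \ Ws).card ≤ ∑ j ∈ J \ Ws, t j := by
    calc (J \ Ws).card = ∑ _j ∈ J \ Ws, 1 := by simp
      _ ≤ ∑ j ∈ J \ Ws, t j := Finset.sum_le_sum hJt
  have hVscard : Vs.card = Vs.card := rfl
  omega

end CWAux

/-- For a Cameron–Walker graph `G` with standard labeling, `i(G) = ∑ tⱼ + m`
(equivalently `depth S/I(G) = reg S/I(G)`) if and only if for every subset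
`V ⊆ {v₁,…,v_m}` one has
`∑_{vᵢ ∈ V} sᵢ + |{j : N_bip(wⱼ) ⊆ V}| ≥ ∑_{j : N_bip(wⱼ) ⊆ V} tⱼ + |V|`. -/
theorem cwGraph_depth_eq_reg_iff (m n : ℕ) (s : Fin m → ℕ) (t : Fin n → ℕ)
    (B : Fin m → Fin n → Prop) [∀ i j, Decidable (B i j)]
    (hm : 1 ≤ m) (hn : 1 ≤ n) (hs : ∀ i, 1 ≤ s i)
    (hconn : (bipGraph m n B).Connected) :
    indepDomNumber (cwGraph m n s t B) = (∑ j, t j) + m ↔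
      ∀ Vs : Finset (Fin m),
        (∑ j ∈ Finset.univ.filter fun j => ∀ i, B i j → i ∈ Vs, t j) + Vs.card ≤
          (∑ i ∈ Vs, s i) +
            (Finset.univ.filter fun j => ∀ i, B i j → i ∈ Vs).card := by
  classical
  constructor
  · -- i(G) = ∑ t + m  →  Hall condition
    intro hval
    by_contra hnot
    push_neg at hnot
    obtain ⟨Vs, hVs⟩ := hnot
    have hids := CWAux.isIDS_Aset s t B hs Vs
    have hle : indepDomNumber (cwGraph m n s t B) ≤ (CWAux.Aset s t B Vs).card := by
      apply Nat.sInf_le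
      exact ⟨_, hids, rfl⟩
    have hcard := CWAux.card_Aset s t B Vs
    have hJf : (Finset.univ.filter fun j => ∀ i, B i j → i ∈ Vs) = CWAux.Jset B Vs := rfl
    rw [hJf] at hVs
    have h1 : Vs.card + (Finset.univ \ Vs).card = m := by
      rw [Finset.card_sdiff_of_subset (Finset.subset_univ _)]
      have := Finset.card_le_card (Finset.subset_univ Vs)
      simp only [Finset.card_univ, Fintype.card_fin] at *
      omega
    have h2 : (∑ j ∈ CWAux.Jset B Vs, t j) +
        ∑ j ∈ Finset.univ \ CWAux.Jset B Vs, t j = ∑ j, t j := by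
      rw [add_comm]; exact Finset.sum_sdiff (Finset.subset_univ _)
    rw [hval] at hle
    omega
  · -- Hall condition → i(G) = ∑ t + m
    intro Hall
    have hbase := CWAux.isIDS_Aset s t B hs (∅ : Finset (Fin m))
    have hSne : {k | ∃ A : Finset (CWVert m n s t),
        IsIndepDomSet (cwGraph m n s t B) A ∧ A.card = k}.Nonempty :=
      ⟨_, _, hbase, rfl⟩
    apply le_antisymm
    · -- upper bound via the baseline set
      have hJempty : CWAux.Jset B (∅ : Finset (Fin m)) = ∅ := by
        ext j
        simp only [Finset.notMem_empty, iff_false, CWAux.mem_Jset]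
        intro h
        obtain ⟨i, hi⟩ := CWAux.exists_B_of_connected B hm hconn j
        exact absurd (h i hi) (by simp)
      have hcard := CWAux.card_Aset s t B (∅ : Finset (Fin m))
      rw [hJempty] at hcard
      simp only [Finset.sdiff_empty, Finset.card_empty, Finset.sum_empty,
        Finset.card_univ, Fintype.card_fin, add_zero, zero_add] at hcard
      have hle : indepDomNumber (cwGraph m n s t B) ≤ (CWAux.Aset s t B ∅).card := by
        apply Nat.sInf_le
        exact ⟨_, hbase, rfl⟩
      rw [hcard] at hle
      omega
    · -- lower bound: every IDS is large
      obtain ⟨A, hA, hAcard⟩ := Nat.sInf_mem hSne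
      calc (∑ j, t j) + m ≤ A.card := CWAux.ids_card_ge s t B hs Hall A hA
        _ = indepDomNumber (cwGraph m n s t B) := hAcard
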